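/- Let k be an algebraically closed field of characteristic 2 and let K ≤ S₇ be the subgroup generated by the permutations (2 6 7)(3 5 4), (2 5)(3 7)(4 6) and (1 6 7 5 2 3 4) (a Frobenius group of order 42). Then the natural 7-dimensional permutation module k⁷, on which K acts by permuting the standard basis vectors, is a semisimple K-module: every K-invariant subspace of k⁷ admits a K-invariant direct complement. -/

import Mathlib

private lemma zmod7_unit_cases :
    ∀ u : ZMod 7, u ≠ 0 → u = 1 ∨ u = 2 ∨ u = 3 ∨ u = 4 ∨ u = 5 ∨ u = 6 := by decide

/-- The natural 7-dimensional permutation module `k^7` over an algebraically closed field `k`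
of characteristic 2, for the given subgroup `K` of the symmetric group (acting by permuting the
standard basis vectors, `g • v = fun i => v (g⁻¹ i)`, so that `g • e_i = e_(g i)`), is semisimple:
every `K`-invariant subspace admits a `K`-invariant direct complement. -/
theorem stmt_11 (k : Type*) [Field k] [IsAlgClosed k] [CharP k 2]
    (K : Subgroup (Equiv.Perm (Fin 7)))
    (hK : K = Subgroup.closure
      { c[(1 : Fin 7), 5, 6] * c[(2 : Fin 7), 4, 3],
      c[(1 : Fin 7), 4] * c[(2 : Fin 7), 6] * c[(3 : Fin 7), 5],
      c[(0 : Fin 7), 5, 6, 4, 1, 2, 3] })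
    (p : Submodule k (Fin 7 → k))
    (hp : ∀ g ∈ K, ∀ v ∈ p, (fun i => v (g⁻¹ i)) ∈ p) :
    ∃ q : Submodule k (Fin 7 → k),
      (∀ g ∈ K, ∀ v ∈ q, (fun i => v (g⁻¹ i)) ∈ q) ∧ IsCompl p q := by
  classical
  have h2 : (2 : k) = 0 := by exact_mod_cast CharP.cast_eq_zero k 2
  have h7 : (7 : k) = 1 := by linear_combination (3 : k) * h2
  -- a primitive 7th root of unity
  have h7k : NeZero ((7 : ℕ) : k) := ⟨by push_cast; rw [h7]; exact one_ne_zero⟩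
  obtain ⟨ζ, hζ⟩ : ∃ ζ : k, IsPrimitiveRoot ζ 7 := by
    obtain ⟨ζ, hζ⟩ := IsAlgClosed.exists_root (Polynomial.cyclotomic 7 k)
      (by simp [Polynomial.degree_cyclotomic])
    exact ⟨ζ, Polynomial.isRoot_cyclotomic_iff.mp hζ⟩
  have hζ7 : ζ ^ 7 = 1 := hζ.pow_eq_one
  have hmod : ∀ n : ℕ, ζ ^ n = ζ ^ (n % 7) := by
    intro n
    conv_lhs => rw [← Nat.mod_add_div n 7]
    rw [pow_add, pow_mul, hζ7, one_pow, mul_one]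
  have hzadd : ∀ u w : ZMod 7, ζ ^ (u + w).val = ζ ^ u.val * ζ ^ w.val := by
    intro u w
    rw [ZMod.val_add, ← hmod, pow_add]
  -- the three generators
  set r : Equiv.Perm (Fin 7) := c[(1 : Fin 7), 5, 6] * c[(2 : Fin 7), 4, 3] with hr
  set s : Equiv.Perm (Fin 7) := c[(1 : Fin 7), 4] * c[(2 : Fin 7), 6] * c[(3 : Fin 7), 5] with hs
  set σ : Equiv.Perm (Fin 7) := c[(0 : Fin 7), 5, 6, 4, 1, 2, 3] with hσdef
  have hrK : r ∈ K := by rw [hK]; exact Subgroup.subset_closure (by left; rfl)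
  have hsK : s ∈ K := by rw [hK]; exact Subgroup.subset_closure (by right; left; rfl)
  have hσK : σ ∈ K := by rw [hK]; exact Subgroup.subset_closure (by right; right; rfl)
  -- position along the 7-cycle
  set pos : Fin 7 → ZMod 7 := ![0, 4, 5, 6, 3, 1, 2] with hposdef
  have hpσ : ∀ i, pos (σ⁻¹ i) = pos i - 1 := by decide
  have hpr : ∀ i, pos (r⁻¹ i) = 4 * pos i := by decide
  have hps : ∀ i, pos (s⁻¹ i) = 6 * pos i := by decide
  have hposbij : Function.Bijective pos := by decide
  -- the eigenvectors
  set v : ZMod 7 → (Fin 7 → k) := fun a i => ζ ^ (a * pos i).val with hvdef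
  set lam : ZMod 7 → k := fun a => ζ ^ (-a).val with hlamdef
  -- the σ-action as an endomorphism
  set f : Module.End k (Fin 7 → k) :=
    { toFun := fun x => fun i => x (σ⁻¹ i)
      map_add' := fun x y => rfl
      map_smul' := fun c x => rfl } with hfdef
  have hfv : ∀ a, f (v a) = lam a • v a := by
    intro a
    funext i
    show ζ ^ (a * pos (σ⁻¹ i)).val = lam a * v a i
    rw [hpσ]
    have : a * (pos i - 1) = (-a) + a * pos i := by ring
    rw [this, hzadd]
  have hrv : ∀ a, (fun i => v a (r⁻¹ i)) = v (4 * a) := by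
    intro a; funext i
    show ζ ^ (a * pos (r⁻¹ i)).val = ζ ^ ((4 * a) * pos i).val
    rw [hpr]; ring_nf
  have hsv : ∀ a, (fun i => v a (s⁻¹ i)) = v (6 * a) := by
    intro a; funext i
    show ζ ^ (a * pos (s⁻¹ i)).val = ζ ^ ((6 * a) * pos i).val
    rw [hps]; ring_nf
  -- lam is injective
  have hlam_inj : Function.Injective lam := by
    intro a b hab
    have := hζ.pow_inj (ZMod.val_lt (-a)) (ZMod.val_lt (-b)) hab
    have := ZMod.val_injective 7 this
    exact neg_injective this
  have hv0 : ∀ a, v a 0 = 1 := by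
    intro a
    show ζ ^ (a * pos 0).val = 1
    have : pos 0 = 0 := rfl
    rw [this, mul_zero]
    simp [ZMod.val_zero]
  have hvne : ∀ a, v a ≠ 0 := by
    intro a h
    have := congrFun h 0
    rw [hv0] at this
    simp at this
  -- aeval on eigenvectors
  have haeval : ∀ (P : Polynomial k) (μ : k) (x : Fin 7 → k), f x = μ • x →
      Polynomial.aeval f P x = P.eval μ • x := by
    intro P μ x hx
    have hpow : ∀ n : ℕ, (f ^ n) x = μ ^ n • x := by
      intro n
      induction n with
      | zero => simp
      | succ m ih =>
          rw [pow_succ, Module.End.mul_apply, hx, map_smul, ih, smul_smul, ← pow_succ']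
    induction P using Polynomial.induction_on' with
    | add P Q hP hQ =>
      rw [map_add, LinearMap.add_apply, hP, hQ, Polynomial.eval_add, add_smul]
    | monomial n c =>
      rw [Polynomial.aeval_monomial, Polynomial.eval_monomial, Module.End.mul_apply,
        Module.algebraMap_end_apply, hpow, smul_smul]
  -- p is stable under polynomials in f
  have hfp : ∀ x ∈ p, f x ∈ p := fun x hx => hp σ hσK x hx
  have hpowp : ∀ (n : ℕ), ∀ x ∈ p, (f ^ n) x ∈ p := by
    intro n
    induction n with
    | zero => intro x hx; simpa using hx
    | succ m ih =>
      intro x hx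
      rw [pow_succ, Module.End.mul_apply]
      exact ih _ (hfp x hx)
  have hPp : ∀ (P : Polynomial k), ∀ x ∈ p, Polynomial.aeval f P x ∈ p := by
    intro P
    induction P using Polynomial.induction_on' with
    | add P Q hP hQ =>
      intro x hx
      rw [map_add, LinearMap.add_apply]
      exact p.add_mem (hP x hx) (hQ x hx)
    | monomial n c =>
      intro x hx
      rw [Polynomial.aeval_monomial, Module.End.mul_apply, Module.algebraMap_end_apply]
      exact p.smul_mem _ (hpowp n x hx)
  -- the projector computation
  have hproj : ∀ (c : ZMod 7 → k) (a : ZMod 7),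
      Polynomial.aeval f (∏ b ∈ Finset.univ.erase a, (Polynomial.X - Polynomial.C (lam b)))
        (∑ b, c b • v b)
      = (c a * ∏ b ∈ Finset.univ.erase a, (lam a - lam b)) • v a := by
    intro c a
    rw [map_sum]
    have hterm : ∀ b : ZMod 7,
        Polynomial.aeval f (∏ b' ∈ Finset.univ.erase a, (Polynomial.X - Polynomial.C (lam b')))
          (c b • v b)
        = (c b * ∏ b' ∈ Finset.univ.erase a, (lam b - lam b')) • v b := by
      intro b
      rw [map_smul]
      rw [haeval _ (lam b) (v b) (hfv b)]
      rw [Polynomial.eval_prod, smul_smul]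
      congr 2
      exact Finset.prod_congr rfl (fun b' _ => by simp)
    rw [Finset.sum_congr rfl (fun b _ => hterm b)]
    rw [Finset.sum_eq_single a]
    · intro b _ hba
      have : (∏ b' ∈ Finset.univ.erase a, (lam b - lam b')) = 0 :=
        Finset.prod_eq_zero (Finset.mem_erase.mpr ⟨hba, Finset.mem_univ b⟩) (by simp)
      rw [this, mul_zero, zero_smul]
    · intro h; exact absurd (Finset.mem_univ a) h
  have hdne : ∀ a : ZMod 7, (∏ b ∈ Finset.univ.erase a, (lam a - lam b)) ≠ 0 := by
    intro a
    refine Finset.prod_ne_zero_iff.mpr (fun b hb => ?_)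
    have hba : b ≠ a := (Finset.mem_erase.mp hb).1
    exact sub_ne_zero_of_ne (fun h => hba (hlam_inj h).symm)
  -- linear independence and basis
  have hli : LinearIndependent k v := by
    rw [Fintype.linearIndependent_iff]
    intro c hc a
    have := hproj c a
    rw [hc, map_zero] at this
    rcases smul_eq_zero.mp this.symm with h | h
    · rcases mul_eq_zero.mp h with h | h
      · exact h
      · exact absurd h (hdne a)
    · exact absurd h (hvne a)
  have hcard : Fintype.card (ZMod 7) = Module.finrank k (Fin 7 → k) := by
    rw [Module.finrank_pi]
    rfl
  set B : Module.Basis (ZMod 7) k (Fin 7 → k) := basisOfLinearIndependentOfCardEqFinrank hli hcard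
    with hBdef
  have hBcoe : ⇑B = v := coe_basisOfLinearIndependentOfCardEqFinrank hli hcard
  have hBrepr : ∀ x : Fin 7 → k, (∑ a, B.repr x a • v a) = x := by
    intro x
    conv_rhs => rw [← B.sum_repr x]
    exact Finset.sum_congr rfl (fun a _ => by rw [hBcoe])
  have hspantop : Submodule.span k (Set.range v) = ⊤ := by
    rw [← hBcoe]
    exact B.span_eq
  -- the component set
  set S : Set (ZMod 7) := {a | v a ∈ p} with hSdef
  have hcomp : ∀ x ∈ p, ∀ a, B.repr x a • v a ∈ p := by
    intro x hx a
    have h1 : Polynomial.aeval f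
        (∏ b ∈ Finset.univ.erase a, (Polynomial.X - Polynomial.C (lam b))) x ∈ p :=
      hPp _ x hx
    have h2 := hproj (fun b => B.repr x b) a
    rw [hBrepr x] at h2
    rw [h2] at h1
    have h3 := p.smul_mem (∏ b ∈ Finset.univ.erase a, (lam a - lam b))⁻¹ h1
    rwa [smul_smul, ← mul_assoc, mul_comm _ (B.repr x a), mul_assoc,
      inv_mul_cancel₀ (hdne a), mul_one] at h3
  have hspan : p = Submodule.span k (v '' S) := by
    apply le_antisymm
    · intro x hx
      rw [← hBrepr x]
      refine Submodule.sum_mem _ (fun a _ => ?_)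
      by_cases hca : B.repr x a = 0
      · rw [hca, zero_smul]; exact Submodule.zero_mem _
      · have hva : v a ∈ p := by
          have := p.smul_mem (B.repr x a)⁻¹ (hcomp x hx a)
          rwa [smul_smul, inv_mul_cancel₀ hca, one_smul] at this
        exact Submodule.smul_mem _ _ (Submodule.subset_span ⟨a, hva, rfl⟩)
    · rw [Submodule.span_le]
      rintro _ ⟨a, ha, rfl⟩
      exact ha
  -- S is stable under multiplication by units
  have hS4 : ∀ a ∈ S, (4 * a) ∈ S := by
    intro a ha
    have := hp r hrK (v a) ha
    rwa [hrv a] at this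
  have hS6 : ∀ a ∈ S, (6 * a) ∈ S := by
    intro a ha
    have := hp s hsK (v a) ha
    rwa [hsv a] at this
  have horb : ∀ a ∈ S, a ≠ 0 → ∀ b : ZMod 7, b ≠ 0 → b ∈ S := by
    intro a haS ha b hb
    have h4 := hS4 a haS
    have h6 := hS6 a haS
    have h2a : (2 : ZMod 7) * a ∈ S := by
      have := hS4 _ h4
      rwa [show (4 : ZMod 7) * (4 * a) = 2 * a by rw [← mul_assoc, show (4 : ZMod 7) * 4 = 2 from by decide]] at this
    have h3a : (3 : ZMod 7) * a ∈ S := by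
      have := hS6 _ h4
      rwa [show (6 : ZMod 7) * (4 * a) = 3 * a by rw [← mul_assoc, show (6 : ZMod 7) * 4 = 3 from by decide]] at this
    have h5a : (5 : ZMod 7) * a ∈ S := by
      have := hS6 _ h2a
      rwa [show (6 : ZMod 7) * (2 * a) = 5 * a by rw [← mul_assoc, show (6 : ZMod 7) * 2 = 5 from by decide]] at this
    haveI : Fact (Nat.Prime 7) := ⟨by norm_num⟩
    have hu : b * a⁻¹ ≠ 0 := by
      intro h
      rcases mul_eq_zero.mp h with h | h
      · exact hb h
      · exact ha (by simpa using (inv_eq_zero.mp h))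
    have hba : (b * a⁻¹) * a = b := by
      field_simp
    have := zmod7_unit_cases _ hu
    rcases this with h | h | h | h | h | h <;> rw [h] at hba <;> rw [← hba]
    · simpa using haS
    · exact h2a
    · exact h3a
    · exact h4
    · exact h5a
    · exact h6
  -- the sum functional
  set Φ : (Fin 7 → k) →ₗ[k] k :=
    { toFun := fun x => ∑ i, x i
      map_add' := fun x y => by simp [Finset.sum_add_distrib]
      map_smul' := fun c x => by simp [Finset.mul_sum] } with hΦdef
  have hΦperm : ∀ (g : Equiv.Perm (Fin 7)) (x : Fin 7 → k), Φ (fun i => x (g⁻¹ i)) = Φ x := by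
    intro g x
    exact Equiv.sum_comp g⁻¹ x
  have hΦv0 : Φ (v 0) = 1 := by
    show (∑ i : Fin 7, v 0 i) = 1
    have : ∀ i, v 0 i = 1 := by
      intro i
      show ζ ^ ((0 : ZMod 7) * pos i).val = 1
      rw [zero_mul]
      simp [ZMod.val_zero]
    rw [Finset.sum_congr rfl (fun i _ => this i)]
    simp only [Finset.sum_const, Finset.card_univ, Fintype.card_fin, nsmul_eq_mul,
      Nat.cast_ofNat, mul_one]
    exact h7
  have hΦva : ∀ a : ZMod 7, a ≠ 0 → Φ (v a) = 0 := by
    intro a ha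
    haveI : Fact (Nat.Prime 7) := ⟨by norm_num⟩
    have hmul : Function.Bijective (fun j : ZMod 7 => a * j) :=
      (Equiv.mulLeft₀ a ha).bijective
    have hcast : Function.Bijective (fun j : Fin 7 => (j : ZMod 7)) := by decide
    show (∑ i : Fin 7, v a i) = 0
    calc (∑ i : Fin 7, v a i) = ∑ j : ZMod 7, ζ ^ (a * j).val :=
          Fintype.sum_bijective pos hposbij _ _ (fun i => rfl)
      _ = ∑ j : ZMod 7, ζ ^ j.val := Fintype.sum_bijective _ hmul _ _ (fun j => rfl)
      _ = ∑ j : Fin 7, ζ ^ (j : ℕ) := by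
          refine Fintype.sum_bijective (fun j : ZMod 7 => (⟨j.val, ZMod.val_lt j⟩ : Fin 7))
            ?_ _ _ (fun j => rfl)
          refine (Fintype.bijective_iff_injective_and_card _).mpr ⟨?_, by simp⟩
          intro a b hab
          exact ZMod.val_injective 7 (by simpa using congrArg Fin.val hab)
      _ = ∑ j ∈ Finset.range 7, ζ ^ j := Fin.sum_univ_eq_sum_range _ _
      _ = 0 := hζ.geom_sum_eq_zero (by norm_num)
  -- case analysis
  by_cases h0 : (0 : ZMod 7) ∈ S
  · by_cases hn : ∃ a ∈ S, a ≠ 0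
    · -- p = ⊤, take q = ⊥
      obtain ⟨a, haS, ha⟩ := hn
      have hptop : p = ⊤ := by
        rw [← top_le_iff, ← hspantop, Submodule.span_le]
        rintro _ ⟨b, rfl⟩
        by_cases hb : b = 0
        · rw [hb]; exact h0
        · exact horb a haS ha b hb
      refine ⟨⊥, ?_, ?_⟩
      · intro g _ x hx
        rw [Submodule.mem_bot] at hx ⊢
        rw [hx]; rfl
      · rw [hptop]; exact isCompl_top_bot
    · -- p = span {v 0}, take q = ker Φ
      push_neg at hn
      have hSeq : v '' S = {v 0} := by
        apply Set.eq_singleton_iff_unique_mem.mpr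
        constructor
        · exact ⟨0, h0, rfl⟩
        · rintro _ ⟨b, hb, rfl⟩
          rw [hn b hb]
      refine ⟨LinearMap.ker Φ, ?_, ?_⟩
      · intro g _ x hx
        rw [LinearMap.mem_ker] at hx ⊢
        rw [hΦperm g x, hx]
      · rw [hspan, hSeq]
        constructor
        · rw [disjoint_iff]
          ext x
          simp only [Submodule.mem_inf, Submodule.mem_bot, Submodule.mem_span_singleton,
            LinearMap.mem_ker]
          constructor
          · rintro ⟨⟨c, rfl⟩, hker⟩
            rw [map_smul, hΦv0, smul_eq_mul, mul_one] at hker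
            rw [hker, zero_smul]
          · rintro rfl
            exact ⟨⟨0, by rw [zero_smul]⟩, map_zero Φ⟩
        · rw [codisjoint_iff, ← top_le_iff]
          intro x _
          have : x = Φ x • v 0 + (x - Φ x • v 0) := by ring_nf
          rw [this]
          refine Submodule.add_mem_sup (Submodule.mem_span_singleton.mpr ⟨Φ x, rfl⟩) ?_
          rw [LinearMap.mem_ker, map_sub, map_smul, hΦv0, smul_eq_mul, mul_one, sub_self]
  · by_cases hn : ∃ a ∈ S, a ≠ 0
    · -- p = span of nontrivial eigenvectors, take q = span {v 0}
      obtain ⟨a, haS, ha⟩ := hn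
      have hSeq : S = {b : ZMod 7 | b ≠ 0} := by
        ext b
        constructor
        · intro hb
          simp only [Set.mem_setOf_eq]
          rintro rfl
          exact h0 hb
        · intro hb
          exact horb a haS ha b hb
      refine ⟨Submodule.span k {v 0}, ?_, ?_⟩
      · intro g hg x hx
        rw [Submodule.mem_span_singleton] at hx ⊢
        obtain ⟨c, rfl⟩ := hx
        refine ⟨c, ?_⟩
        funext i
        show c * v 0 i = c * v 0 (g⁻¹ i)
        have : ∀ j, v 0 j = 1 := by
          intro j
          show ζ ^ ((0 : ZMod 7) * pos j).val = 1
          rw [zero_mul]; simp [ZMod.val_zero]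
        rw [this, this]
      · constructor
        · rw [disjoint_iff]
          have hker : p ≤ LinearMap.ker Φ := by
            rw [hspan, Submodule.span_le]
            rintro _ ⟨b, hb, rfl⟩
            simp only [SetLike.mem_coe, LinearMap.mem_ker]
            rw [hSeq] at hb
            exact hΦva b hb
          rw [← le_bot_iff]
          intro x hx
          rw [Submodule.mem_inf] at hx
          obtain ⟨hxp, hxq⟩ := hx
          rw [Submodule.mem_span_singleton] at hxq
          obtain ⟨c, rfl⟩ := hxq
          have := hker hxp
          rw [LinearMap.mem_ker, map_smul, hΦv0, smul_eq_mul, mul_one] at this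
          rw [Submodule.mem_bot, this, zero_smul]
        · rw [codisjoint_iff, ← top_le_iff, ← hspantop, Submodule.span_le]
          rintro _ ⟨b, rfl⟩
          by_cases hb : b = 0
          · rw [hb]
            exact Submodule.mem_sup_right (Submodule.subset_span rfl)
          · refine Submodule.mem_sup_left ?_
            rw [hspan]
            refine Submodule.subset_span ⟨b, ?_, rfl⟩
            rw [hSeq]; exact hb
    · -- p = ⊥, take q = ⊤
      push_neg at hn
      have hpbot : p = ⊥ := by
        rw [hspan]
        convert Submodule.span_empty
        rw [Set.image_eq_empty]
        ext b
        simp only [Set.mem_empty_iff_false, iff_false]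
        intro hb
        by_cases hb0 : b = 0
        · rw [hb0] at hb; exact h0 hb
        · exact hb0 (hn b hb)
      refine ⟨⊤, ?_, ?_⟩
      · intro g _ x _; exact Submodule.mem_top
      · rw [hpbot]; exact isCompl_bot_top
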